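/- Let c ∈ ℂ, let N be a natural number, and let a : Fin N → ℂ and b : Fin N → ℂ. Define f : ℂ → ℂ by f(z) = z² + c + Σ_{m} b_m/(z − a_m), where division by zero is interpreted as 0, so that f is a total function on ℂ. Suppose z ∈ ℂ satisfies ‖f^[n](z)‖ → ∞ as n → ∞. Then the sequence n ↦ 2^{−n}·log‖f^[n](z)‖ converges to a finite real limit Ĝ(z), and the corresponding limit at the point f(z) equals 2·Ĝ(z), i.e. 2^{−n}·log‖f^[n](f(z))‖ → 2·Ĝ(z). -/

import Mathlib

open Filter Topology

/-- Green's-type function for f(z) = z² + c + Σ b_m/(z − a_m): for an escaping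
point z the limit Ĝ(z) = lim 2^{−n} log‖f^[n](z)‖ exists, and the corresponding
limit at f(z) equals 2·Ĝ(z). -/
theorem stmt4 (c : ℂ) (N : ℕ) (a b : Fin N → ℂ) (f : ℂ → ℂ)
    (hf : ∀ z : ℂ, f z = z ^ 2 + c + ∑ m : Fin N, b m / (z - a m))
    (z : ℂ) (hz : Tendsto (fun n => ‖f^[n] z‖) atTop atTop) :
    ∃ G : ℝ,
      Tendsto (fun n => ((2 : ℝ) ^ n)⁻¹ * Real.log ‖f^[n] z‖) atTop (𝓝 G) ∧
      Tendsto (fun n => ((2 : ℝ) ^ n)⁻¹ * Real.log ‖f^[n] (f z)‖) atTop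
        (𝓝 (2 * G)) := by
  set K : ℝ := ‖c‖ + ∑ m : Fin N, ‖b m‖ with hKdef
  have hK0 : 0 ≤ K := by positivity
  set R : ℝ := 1 + 2 * K + ∑ m : Fin N, ‖a m‖ with hRdef
  have hsa : (0:ℝ) ≤ ∑ m : Fin N, ‖a m‖ := by positivity
  have hR1 : 1 ≤ R := by rw [hRdef]; linarith
  -- main estimate
  have key : ∀ w : ℂ, R ≤ ‖w‖ → ‖w‖ ^ 2 / 2 ≤ ‖f w‖ ∧ ‖f w‖ ≤ 2 * ‖w‖ ^ 2 := by
    intro w hw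
    have hw1 : 1 ≤ ‖w‖ := le_trans hR1 hw
    have hdiff : ‖f w - w ^ 2‖ ≤ K := by
      rw [hf]
      have h1 : w ^ 2 + c + (∑ m : Fin N, b m / (w - a m)) - w ^ 2
          = c + ∑ m : Fin N, b m / (w - a m) := by ring
      rw [h1]
      refine (norm_add_le _ _).trans ?_
      refine add_le_add (le_refl _) ((norm_sum_le _ _).trans (Finset.sum_le_sum ?_))
      intro m _
      rw [norm_div]
      have h2 : ‖a m‖ ≤ ∑ m : Fin N, ‖a m‖ :=
        Finset.single_le_sum (fun i _ => norm_nonneg _) (Finset.mem_univ m)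
      have h3 : ‖w‖ - ‖a m‖ ≤ ‖w - a m‖ := norm_sub_norm_le w (a m)
      have ha : 1 ≤ ‖w - a m‖ := by rw [hRdef] at hw; linarith
      exact div_le_self (norm_nonneg _) ha
    have hKw : 2 * K ≤ ‖w‖ ^ 2 := by
      have : 1 + 2 * K ≤ ‖w‖ := by rw [hRdef] at hw; linarith
      nlinarith
    have hlow : ‖w‖ ^ 2 - ‖f w‖ ≤ K := by
      have := norm_sub_norm_le (w ^ 2) (f w)
      rw [norm_sub_rev] at this
      have h4 : ‖(w:ℂ) ^ 2‖ = ‖w‖ ^ 2 := norm_pow w 2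
      linarith
    have hup : ‖f w‖ ≤ ‖w‖ ^ 2 + K := by
      have h5 : f w = w ^ 2 + (f w - w ^ 2) := by ring
      calc ‖f w‖ = ‖w ^ 2 + (f w - w ^ 2)‖ := by rw [← h5]
        _ ≤ ‖(w:ℂ) ^ 2‖ + ‖f w - w ^ 2‖ := norm_add_le _ _
        _ ≤ ‖w‖ ^ 2 + K := by rw [norm_pow]; linarith
    constructor <;> linarith
  -- eventually large
  have hev : ∀ᶠ n in atTop, R ≤ ‖f^[n] z‖ := hz.eventually_ge_atTop R
  set L : ℕ → ℝ := fun n => Real.log ‖f^[n] z‖ with hLdef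
  set u : ℕ → ℝ := fun n => ((2 : ℝ) ^ n)⁻¹ * L n with hudef
  have hstep : ∀ᶠ n in atTop, |L (n + 1) - 2 * L n| ≤ Real.log 2 := by
    filter_upwards [hev] with n hn
    set w := f^[n] z with hwdef
    have hw1 : 1 ≤ ‖w‖ := le_trans hR1 hn
    have hwpos : 0 < ‖w‖ := by linarith
    obtain ⟨hlo, hhi⟩ := key w hn
    have hiter : f^[n + 1] z = f w := by
      rw [Function.iterate_succ_apply']
    have hLn1 : L (n + 1) = Real.log ‖f w‖ := by
      simp only [hLdef, hiter]
    have hLn : L n = Real.log ‖w‖ := rfl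
    have hfwpos : 0 < ‖f w‖ := by nlinarith
    have hub : Real.log ‖f w‖ ≤ Real.log 2 + 2 * Real.log ‖w‖ := by
      have := Real.log_le_log (by positivity) hhi
      rw [Real.log_mul (by norm_num) (by positivity), Real.log_pow] at this
      push_cast at this; linarith
    have hlb : 2 * Real.log ‖w‖ - Real.log 2 ≤ Real.log ‖f w‖ := by
      have := Real.log_le_log (by positivity) hlo
      rw [Real.log_div (by positivity) (by norm_num), Real.log_pow] at this
      push_cast at this; linarith
    rw [hLn1, hLn, abs_le]
    constructor <;> linarith
  -- Cauchy
  have hdist : ∀ᶠ n in atTop, dist (u n) (u (n + 1)) ≤ Real.log 2 * (1 / 2 : ℝ) ^ n := by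
    filter_upwards [hstep] with n hn
    have h2n : (0:ℝ) < 2 ^ n := by positivity
    have heq : u n - u (n + 1) = ((2 : ℝ) ^ (n + 1))⁻¹ * (2 * L n - L (n + 1)) := by
      simp only [hudef]
      field_simp
      ring
    rw [Real.dist_eq, heq, abs_mul,
      abs_of_nonneg (by positivity : (0:ℝ) ≤ ((2:ℝ) ^ (n+1))⁻¹)]
    have habs : |2 * L n - L (n + 1)| ≤ Real.log 2 := by rwa [abs_sub_comm] at hn
    have hl2 : (0:ℝ) ≤ Real.log 2 := Real.log_nonneg (by norm_num)
    calc ((2:ℝ) ^ (n+1))⁻¹ * |2 * L n - L (n + 1)|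
        ≤ ((2:ℝ) ^ (n+1))⁻¹ * Real.log 2 := by gcongr
      _ ≤ Real.log 2 * (1 / 2 : ℝ) ^ n := by
          rw [mul_comm]
          gcongr
          rw [one_div, inv_pow]
          exact inv_anti₀ h2n (by rw [pow_succ]; nlinarith)
  have hsum : Summable (fun n => dist (u n) (u (n + 1))) := by
    refine Summable.of_norm_bounded_eventually
      ((summable_geometric_of_lt_one (by norm_num) (by norm_num) :
        Summable (fun n => (1 / 2 : ℝ) ^ n)).mul_left (Real.log 2)) ?_
    rw [Nat.cofinite_eq_atTop]
    filter_upwards [hdist] with n hn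
    rwa [Real.norm_eq_abs, abs_of_nonneg dist_nonneg]
  have hcau : CauchySeq u := cauchySeq_of_summable_dist hsum
  obtain ⟨G, hG⟩ := cauchySeq_tendsto_of_complete hcau
  refine ⟨G, hG, ?_⟩
  have h2 : Tendsto (fun n => 2 * u (n + 1)) atTop (𝓝 (2 * G)) :=
    (hG.comp (tendsto_add_atTop_nat 1)).const_mul 2
  refine h2.congr fun n => ?_
  simp only [hudef, hLdef]
  rw [Function.iterate_succ_apply, pow_succ]
  field_simp
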